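/- Let V be a finite-dimensional vector space over K = GF(2) and f : V → V nilpotent, with V = ⟨u_1⟩ ⊕ ⟨u_2⟩, e(u_1) = R, e(u_2) = S, and R + 1 < S. Let s, q be integers with 0 < s < q and 0 ≤ R − s < S − q, and set X = ⟨f^{R−s}(u_1) + f^{S−q}(u_2)⟩^c. Then dim_K X = s + q − 1. Moreover, if s > 1 then X = ⟨f^{R−s}(u_1) + f^{S−q}(u_2)⟩ ⊕ ⟨f^{R−s+1}(u_1)⟩, a direct sum of f-cyclic subspaces of dimensions q and s − 1, and if s = 1 then X = ⟨f^{R−s}(u_1) + f^{S−q}(u_2)⟩ is f-cyclic of dimension q. -/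

import Mathlib

open Module LinearMap

section Defs

variable {K V : Type*} [Field K] [AddCommGroup V] [Module K V]

/-- `α` commutes with `f`. -/
def Commutes (f : V →ₗ[K] V) (α : V ≃ₗ[K] V) : Prop :=
  ∀ v, α (f v) = f (α v)

/-- `X` is hyperinvariant: invariant under every endomorphism commuting with `f`. -/
def Hyperinv (f : V →ₗ[K] V) (X : Submodule K V) : Prop :=
  ∀ g : V →ₗ[K] V, (∀ v, g (f v) = f (g v)) → ∀ x ∈ X, g x ∈ X

/-- `X` is characteristic: `f`-invariant and invariant under every automorphism
commuting with `f`. -/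
def Charinv (f : V →ₗ[K] V) (X : Submodule K V) : Prop :=
  (∀ x ∈ X, f x ∈ X) ∧ ∀ α : V ≃ₗ[K] V, Commutes f α → ∀ x ∈ X, α x ∈ X

/-- The characteristic hull of a set `B`: the subspace spanned by all
`f^i (α b)`, `b ∈ B`, `α` an automorphism commuting with `f`. -/
def charHull (f : V →ₗ[K] V) (B : Set V) : Submodule K V :=
  Submodule.span K
    {y | ∃ b ∈ B, ∃ i : ℕ, ∃ α : V ≃ₗ[K] V, Commutes f α ∧ y = (f ^ i) (α b)}

/-- The `f`-cyclic subspace generated by `x`. -/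
def cyc (f : V →ₗ[K] V) (x : V) : Submodule K V :=
  Submodule.span K (Set.range fun i : ℕ => (f ^ i) x)

/-- The `f`-invariant span of a set `B`. -/
def invSpan (f : V →ₗ[K] V) (B : Set V) : Submodule K V :=
  Submodule.span K {y | ∃ b ∈ B, ∃ i : ℕ, y = (f ^ i) b}

/-- The exponent of `x`: the least `ℓ` with `f^ℓ x = 0`. -/
noncomputable def expnt (f : V →ₗ[K] V) (x : V) : ℕ :=
  sInf {ℓ : ℕ | (f ^ ℓ) x = 0}

/-- The height of `x`: the largest `q` with `x ∈ f^q V`. -/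
noncomputable def hgt (f : V →ₗ[K] V) (x : V) : ℕ :=
  sSup {q : ℕ | x ∈ LinearMap.range (f ^ q)}

/-- `u` is a generator of `V`: `V = ⟨u⟩ ⊕ V₂` for some `f`-invariant `V₂`. -/
def IsGenerator (f : V →ₗ[K] V) (u : V) : Prop :=
  u ≠ 0 ∧ ∃ V₂ : Submodule K V, (∀ x ∈ V₂, f x ∈ V₂) ∧ IsCompl (cyc f u) V₂

/-- `(u 0, …, u (m-1))` is a generator tuple of `V`:
`V = ⟨u 0⟩ ⊕ ⋯ ⊕ ⟨u (m-1)⟩` with nondecreasing exponents. -/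
def IsGenTuple {m : ℕ} (f : V →ₗ[K] V) (u : Fin m → V) : Prop :=
  DirectSum.IsInternal (fun i => cyc f (u i)) ∧ Monotone fun i => expnt f (u i)

/-- The Ulm invariant `d(f,r) = dim ((ker f ⊓ f^{r-1} V) / (ker f ⊓ f^r V))`. -/
noncomputable def ulm (f : V →ₗ[K] V) (r : ℕ) : ℕ :=
  Module.finrank K
    (↥(LinearMap.ker f ⊓ LinearMap.range (f ^ (r - 1))) ⧸
      Submodule.comap (LinearMap.ker f ⊓ LinearMap.range (f ^ (r - 1))).subtype
        (LinearMap.ker f ⊓ LinearMap.range (f ^ r)))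

/-- The largest hyperinvariant subspace contained in `X`
(the sum of all hyperinvariant subspaces contained in `X`). -/
noncomputable def largestHyperinv (f : V →ₗ[K] V) (X : Submodule K V) : Submodule K V :=
  sSup {W : Submodule K V | Hyperinv f W ∧ W ≤ X}

end Defs

section Aux
variable {K V : Type*} [Field K] [AddCommGroup V] [Module K V] {f : V →ₗ[K] V}

lemma pow_add_apply (f : V →ₗ[K] V) (m n : ℕ) (u : V) :
    (f ^ (m + n)) u = (f ^ m) ((f ^ n) u) := by
  rw [pow_add, Module.End.mul_apply]

lemma expnt_spec (hf : IsNilpotent f) (x : V) : (f ^ expnt f x) x = 0 := by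
  have hne : {ℓ : ℕ | (f ^ ℓ) x = 0}.Nonempty := by
    obtain ⟨n, hn⟩ := hf; exact ⟨n, by simp [hn]⟩
  exact Nat.sInf_mem hne

lemma expnt_min {x : V} {k : ℕ} (hk : k < expnt f x) : (f ^ k) x ≠ 0 :=
  fun h => absurd (Nat.sInf_le h) (not_le.mpr hk)

lemma pow_apply_eq_zero (hf : IsNilpotent f) {x : V} {k : ℕ} (hk : expnt f x ≤ k) :
    (f ^ k) x = 0 := by
  have h : k = (k - expnt f x) + expnt f x := by omega
  rw [h, pow_add_apply, expnt_spec hf, map_zero]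

lemma expnt_pow_apply (hf : IsNilpotent f) {x : V} {k : ℕ} (hk : k ≤ expnt f x) :
    expnt f ((f ^ k) x) = expnt f x - k := by
  apply le_antisymm
  · apply Nat.sInf_le
    show (f ^ (expnt f x - k)) ((f ^ k) x) = 0
    rw [← pow_add_apply]
    have h : expnt f x - k + k = expnt f x := by omega
    rw [h]; exact expnt_spec hf x
  · have hne : (expnt f ((f ^ k) x)) ∈ {ℓ : ℕ | (f ^ ℓ) ((f ^ k) x) = 0} :=
      expnt_spec hf ((f ^ k) x)
    by_contra hlt
    push_neg at hlt
    have : (f ^ (expnt f ((f ^ k) x))) ((f ^ k) x) ≠ 0 := by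
      rw [← pow_add_apply]
      exact expnt_min (by omega)
    exact this hne

lemma mem_cyc_self (f : V →ₗ[K] V) (u : V) : u ∈ cyc f u :=
  Submodule.subset_span ⟨0, by simp⟩

lemma pow_mem_cyc (f : V →ₗ[K] V) (u : V) (i : ℕ) : (f ^ i) u ∈ cyc f u :=
  Submodule.subset_span ⟨i, rfl⟩

lemma cyc_fInv {u : V} {v : V} (hv : v ∈ cyc f u) : f v ∈ cyc f u := by
  have hmap : Submodule.map f (cyc f u) ≤ cyc f u := by
    rw [cyc, Submodule.map_span]
    apply Submodule.span_le.mpr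
    rintro _ ⟨_, ⟨i, rfl⟩, rfl⟩
    have h : f ((f ^ i) u) = (f ^ (1 + i)) u := by rw [pow_add_apply, pow_one]
    rw [h]; exact pow_mem_cyc f u (1 + i)
  exact hmap ⟨v, hv, rfl⟩

lemma cyc_le {u : V} {W : Submodule K V} (hW : ∀ v ∈ W, f v ∈ W) (hu : u ∈ W) :
    cyc f u ≤ W := by
  apply Submodule.span_le.mpr
  rintro _ ⟨i, rfl⟩
  show (f ^ i) u ∈ W
  induction i with
  | zero => simpa using hu
  | succ n ih =>
    have h : (f ^ (n + 1)) u = f ((f ^ n) u) := by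
      rw [Nat.add_comm, pow_add_apply, pow_one]
    rw [h]; exact hW _ ih

lemma cyc_pow_le (f : V →ₗ[K] V) (u : V) (k : ℕ) : cyc f ((f ^ k) u) ≤ cyc f u :=
  cyc_le (fun _ h => cyc_fInv h) (pow_mem_cyc f u k)

lemma cyc_mono_pow (f : V →ₗ[K] V) (u : V) {j k : ℕ} (hk : k ≤ j) :
    cyc f ((f ^ j) u) ≤ cyc f ((f ^ k) u) := by
  have h2 : j - k + k = j := by omega
  have h : (f ^ j) u = (f ^ (j - k)) ((f ^ k) u) := by
    rw [← pow_add_apply, h2]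
  rw [h]; exact cyc_pow_le f _ _

lemma pow_apply_mem_cyc_pow {u v : V} (k : ℕ) (hv : v ∈ cyc f u) :
    (f ^ k) v ∈ cyc f ((f ^ k) u) := by
  refine Submodule.span_induction ?_ ?_ ?_ ?_ hv
  · rintro _ ⟨i, rfl⟩
    have h : (f ^ k) ((f ^ i) u) = (f ^ i) ((f ^ k) u) := by
      rw [← pow_add_apply, Nat.add_comm, pow_add_apply]
    rw [h]; exact pow_mem_cyc f _ i
  · simp
  · intro a b _ _ ha hb; rw [map_add]; exact Submodule.add_mem _ ha hb
  · intro c a _ ha; rw [map_smul]; exact Submodule.smul_mem _ c ha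


lemma sum_mem_cyc (f : V →ₗ[K] V) (u : V) (c : ℕ → K) (n : ℕ) :
    ∑ i ∈ Finset.range n, c i • (f ^ i) u ∈ cyc f u :=
  Submodule.sum_mem _ fun i _ => Submodule.smul_mem _ _ (pow_mem_cyc f u i)

lemma indep_aux (hf : IsNilpotent f) :
    ∀ (e : ℕ) (u : V), expnt f u = e → ∀ c : ℕ → K,
      ∑ i ∈ Finset.range e, c i • (f ^ i) u = 0 → ∀ i < e, c i = 0 := by
  intro e
  induction e with
  | zero => intro u _ c _ i hi; omega
  | succ n ih =>
    intro u hu c hsum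
    have hc0 : c 0 = 0 := by
      have h1 : (f ^ n) (∑ i ∈ Finset.range (n+1), c i • (f ^ i) u) = 0 := by
        rw [hsum, map_zero]
      rw [map_sum] at h1
      have h2 : ∀ i ∈ Finset.range (n+1),
          (f ^ n) (c i • (f ^ i) u) = if i = 0 then c 0 • (f ^ n) u else 0 := by
        intro i _
        rw [map_smul, ← pow_add_apply]
        split_ifs with h
        · subst h; simp
        · rw [pow_apply_eq_zero hf (by omega), smul_zero]
      rw [Finset.sum_congr rfl h2, Finset.sum_ite_eq' (Finset.range (n+1)) 0
        (fun _ => c 0 • (f ^ n) u)] at h1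
      simp only [Finset.mem_range, Nat.succ_pos, if_pos] at h1
      have hne : (f ^ n) u ≠ 0 := expnt_min (by omega)
      rcases smul_eq_zero.mp h1 with h | h
      · exact h
      · exact absurd h hne
    have hshift : ∑ i ∈ Finset.range n, c (i+1) • (f ^ i) (f u) = 0 := by
      have h3 := Finset.sum_range_succ' (fun i => c i • (f ^ i) u) n
      rw [hsum] at h3
      have h4 : ∀ i ∈ Finset.range n, c (i+1) • (f ^ (i+1)) u = c (i+1) • (f ^ i) (f u) := by
        intro i _
        rw [pow_succ, Module.End.mul_apply]
      rw [hc0] at h3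
      simp only [zero_smul, add_zero] at h3
      rw [← Finset.sum_congr rfl h4]
      exact h3.symm
    have hfu : expnt f (f u) = n := by
      have := expnt_pow_apply hf (x := u) (k := 1) (by omega)
      rw [pow_one] at this
      omega
    intro i hi
    match i with
    | 0 => exact hc0
    | (j+1) => exact ih (f u) hfu (fun i => c (i+1)) hshift j (by omega)

lemma indep (hf : IsNilpotent f) (u : V) (c : ℕ → K)
    (h : ∑ i ∈ Finset.range (expnt f u), c i • (f ^ i) u = 0) :
    ∀ i < expnt f u, c i = 0 :=
  indep_aux hf (expnt f u) u rfl c h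

lemma mem_cyc_sum (hf : IsNilpotent f) {u v : V} (hv : v ∈ cyc f u) :
    ∃ c : ℕ → K, v = ∑ i ∈ Finset.range (expnt f u), c i • (f ^ i) u := by
  refine Submodule.span_induction ?_ ?_ ?_ ?_ hv
  · rintro _ ⟨i, rfl⟩
    by_cases h : i < expnt f u
    · refine ⟨fun j => if j = i then 1 else 0, ?_⟩
      simp only [ite_smul, one_smul, zero_smul]
      rw [Finset.sum_ite_eq' (Finset.range (expnt f u)) i (fun j => (f ^ j) u)]
      simp [h]
    · refine ⟨0, ?_⟩
      simp only [Pi.zero_apply, zero_smul, Finset.sum_const_zero]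
      exact pow_apply_eq_zero hf (by omega)
  · exact ⟨0, by simp⟩
  · rintro a b _ _ ⟨ca, ha⟩ ⟨cb, hb⟩
    refine ⟨ca + cb, ?_⟩
    rw [ha, hb, ← Finset.sum_add_distrib]
    refine Finset.sum_congr rfl fun i _ => ?_
    rw [Pi.add_apply, add_smul]
  · rintro t a _ ⟨ca, ha⟩
    refine ⟨t • ca, ?_⟩
    rw [ha, Finset.smul_sum]
    refine Finset.sum_congr rfl fun i _ => ?_
    rw [Pi.smul_apply, smul_smul, smul_eq_mul]


lemma finrank_cyc (hf : IsNilpotent f) [FiniteDimensional K V] (u : V) :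
    Module.finrank K (cyc f u) = expnt f u := by
  set e := expnt f u with he
  have hspan : cyc f u = Submodule.span K (Set.range fun i : Fin e => (f ^ (i : ℕ)) u) := by
    apply le_antisymm
    · apply Submodule.span_le.mpr
      rintro _ ⟨i, rfl⟩
      by_cases h : i < e
      · exact Submodule.subset_span ⟨⟨i, h⟩, rfl⟩
      · show (f ^ i) u ∈ _
        rw [pow_apply_eq_zero hf (by omega)]
        exact Submodule.zero_mem _
    · apply Submodule.span_le.mpr
      rintro _ ⟨i, rfl⟩
      exact pow_mem_cyc f u i
  have hli : LinearIndependent K (fun i : Fin e => (f ^ (i : ℕ)) u) := by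
    rw [Fintype.linearIndependent_iff]
    intro g hg i
    set c : ℕ → K := fun j => if h : j < e then g ⟨j, h⟩ else 0 with hc
    have hsum : ∑ j ∈ Finset.range e, c j • (f ^ j) u = 0 := by
      rw [Finset.sum_range fun j => c j • (f ^ j) u]
      rw [← hg]
      refine Finset.sum_congr rfl fun j _ => ?_
      simp [hc, j.isLt]
    have h2 := indep hf u c hsum i.1 i.isLt
    rw [hc] at h2
    simpa [i.isLt] using h2
  rw [hspan, finrank_span_eq_card hli, Fintype.card_fin]

lemma two_indep (hf : IsNilpotent f) {u₁ u₂ : V}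
    (hdisj : Disjoint (cyc f u₁) (cyc f u₂)) (c d : ℕ → K)
    (h : ∑ i ∈ Finset.range (expnt f u₁), c i • (f ^ i) u₁
        + ∑ j ∈ Finset.range (expnt f u₂), d j • (f ^ j) u₂ = 0) :
    (∀ i < expnt f u₁, c i = 0) ∧ (∀ j < expnt f u₂, d j = 0) := by
  set A := ∑ i ∈ Finset.range (expnt f u₁), c i • (f ^ i) u₁ with hA
  set B := ∑ j ∈ Finset.range (expnt f u₂), d j • (f ^ j) u₂ with hB
  have hA1 : A ∈ cyc f u₁ := sum_mem_cyc f u₁ c _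
  have hB2 : B ∈ cyc f u₂ := sum_mem_cyc f u₂ d _
  have hA2 : A ∈ cyc f u₂ := by
    have : A = -B := by rw [eq_neg_iff_add_eq_zero]; exact h
    rw [this]; exact Submodule.neg_mem _ hB2
  have hA0 : A = 0 := by
    have := hdisj.le_bot (Submodule.mem_inf.mpr ⟨hA1, hA2⟩)
    simpa using this
  have hB0 : B = 0 := by
    have := h; rw [hA0, zero_add] at this; exact this
  exact ⟨indep hf u₁ c hA0, indep hf u₂ d hB0⟩

lemma auto_fix [FiniteDimensional K V] {M N : Submodule K V} (α : V ≃ₗ[K] V)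
    (hM : ∀ v ∈ M, α v ∈ M) (hN : ∀ v ∈ N, α v ∈ N) {u : V} (hu : u ∈ N)
    (huM : u ∉ M) (hcodim : ∀ v ∈ N, v ∈ M ∨ v - u ∈ M) : α u - u ∈ M := by
  have hmap : Submodule.map (α : V →ₗ[K] V) N = N := by
    have hle : Submodule.map (α : V →ₗ[K] V) N ≤ N := by
      rintro _ ⟨v, hv, rfl⟩; exact hN v hv
    refine Submodule.eq_of_le_of_finrank_le hle ?_
    rw [LinearEquiv.finrank_map_eq]
  obtain ⟨w, hwN, hw⟩ : ∃ w ∈ N, α w = u := by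
    have : u ∈ Submodule.map (α : V →ₗ[K] V) N := hmap.symm ▸ hu
    obtain ⟨w, hwN, hw⟩ := this
    exact ⟨w, hwN, hw⟩
  rcases hcodim w hwN with hwM | hwM
  · exact absurd (hw ▸ hM w hwM) huM
  · have : α (w - u) ∈ M := hM _ hwM
    rw [map_sub, hw] at this
    have : -(u - α u) ∈ M := Submodule.neg_mem _ this
    rwa [neg_sub] at this

lemma exists_auto (hf : IsNilpotent f) (W₁ W₂ : Submodule K V) (hcompl : IsCompl W₁ W₂)
    (h1 : ∀ v ∈ W₁, f v ∈ W₁) (h2 : ∀ v ∈ W₂, f v ∈ W₂) :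
    ∃ α : V ≃ₗ[K] V, (∀ v, α (f v) = f (α v)) ∧
      (∀ v ∈ W₁, α v = v + f v) ∧ (∀ v ∈ W₂, α v = v) := by
  set π : V →ₗ[K] V := W₁.subtype.comp (W₁.projectionOnto W₂ hcompl) with hπ
  have hπ1 : ∀ v ∈ W₁, π v = v := by
    intro v hv
    simp [hπ, Submodule.projectionOnto_apply_left hcompl ⟨v, hv⟩]
  have hπ2 : ∀ v ∈ W₂, π v = 0 := by
    intro v hv
    simp [hπ, Submodule.projectionOnto_apply_right hcompl ⟨v, hv⟩]
  have hπmem : ∀ v, π v ∈ W₁ := fun v => (W₁.projectionOnto W₂ hcompl v).2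
  have hdecomp : ∀ v : V, ∃ a ∈ W₁, ∃ b ∈ W₂, v = a + b := by
    intro v
    have : v ∈ W₁ ⊔ W₂ := by rw [hcompl.sup_eq_top]; trivial
    obtain ⟨a, ha, b, hb, hab⟩ := Submodule.mem_sup.mp this
    exact ⟨a, ha, b, hb, hab.symm⟩
  have hπf : ∀ v, π (f v) = f (π v) := by
    intro v
    obtain ⟨a, ha, b, hb, rfl⟩ := hdecomp v
    have e1 : π (a + b) = a := by rw [map_add, hπ1 a ha, hπ2 b hb, add_zero]
    have e2 : π (f a + f b) = f a := by
      rw [map_add, hπ1 _ (h1 a ha), hπ2 _ (h2 b hb), add_zero]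
    calc π (f (a + b)) = π (f a + f b) := by rw [map_add]
      _ = f a := e2
      _ = f (π (a + b)) := by rw [e1]
  set g : V →ₗ[K] V := f ∘ₗ π with hg
  have hgpow : ∀ n : ℕ, ∀ v, (g ^ (n + 1)) v = (f ^ (n + 1)) (π v) := by
    intro n
    induction n with
    | zero => intro v; simp [hg, pow_one]
    | succ m ih =>
      intro v
      have h1' : (g ^ (m + 1 + 1)) v = (g ^ (m + 1)) (g v) := by
        rw [pow_succ, Module.End.mul_apply]
      rw [h1', ih (g v)]
      have e3 : π (g v) = f (π v) := by
        show π (f (π v)) = f (π v)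
        rw [hπf, hπ1 _ (hπmem v)]
      rw [e3, pow_add_apply f (m + 1) 1, pow_one]
  have hgnil : IsNilpotent g := by
    obtain ⟨n, hn⟩ := hf
    refine ⟨n + 1, ?_⟩
    ext v
    rw [LinearMap.zero_apply, hgpow n v]
    have : (f ^ (n + 1)) = 0 := by rw [pow_succ', hn, mul_zero]
    rw [this, LinearMap.zero_apply]
  have hunit : IsUnit ((1 : V →ₗ[K] V) + g) := IsNilpotent.isUnit_one_add hgnil
  have hbij : Function.Bijective ((1 : V →ₗ[K] V) + g) := by
    have := Module.End.isUnit_iff ((1 : V →ₗ[K] V) + g)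
    exact this.mp hunit
  refine ⟨LinearEquiv.ofBijective _ hbij, ?_, ?_, ?_⟩
  · intro v
    show ((1 : V →ₗ[K] V) + g) (f v) = f (((1 : V →ₗ[K] V) + g) v)
    simp only [LinearMap.add_apply, Module.End.one_apply, map_add, hg,
      LinearMap.coe_comp, Function.comp_apply]
    rw [hπf]
  · intro v hv
    show ((1 : V →ₗ[K] V) + g) v = v + f v
    simp only [LinearMap.add_apply, Module.End.one_apply, hg,
      LinearMap.coe_comp, Function.comp_apply]
    rw [hπ1 v hv]
  · intro v hv
    show ((1 : V →ₗ[K] V) + g) v = v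
    simp only [LinearMap.add_apply, Module.End.one_apply, hg,
      LinearMap.coe_comp, Function.comp_apply]
    rw [hπ2 v hv, map_zero, add_zero]

end Aux

section Aux2
variable {K V : Type*} [Field K] [AddCommGroup V] [Module K V] {f : V →ₗ[K] V}

lemma cyc_zero (f : V →ₗ[K] V) : cyc f (0 : V) = ⊥ := by
  apply le_antisymm
  · apply Submodule.span_le.mpr
    rintro _ ⟨i, rfl⟩
    simp
  · exact bot_le

lemma pow_mem_of_fInv {W : Submodule K V} (hW : ∀ v ∈ W, f v ∈ W) {v : V}
    (hv : v ∈ W) (i : ℕ) : (f ^ i) v ∈ W := by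
  induction i with
  | zero => simpa using hv
  | succ n ih =>
    have h : (f ^ (n + 1)) v = f ((f ^ n) v) := by
      rw [Nat.add_comm, pow_add_apply, pow_one]
    rw [h]; exact hW _ ih

lemma sup_fInv {W₁ W₂ : Submodule K V} (h1 : ∀ v ∈ W₁, f v ∈ W₁)
    (h2 : ∀ v ∈ W₂, f v ∈ W₂) : ∀ v ∈ W₁ ⊔ W₂, f v ∈ W₁ ⊔ W₂ := by
  intro v hv
  obtain ⟨a, ha, b, hb, rfl⟩ := Submodule.mem_sup.mp hv
  rw [map_add]
  exact Submodule.add_mem _ (Submodule.mem_sup_left (h1 a ha))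
    (Submodule.mem_sup_right (h2 b hb))

lemma cyc_fInv' (f : V →ₗ[K] V) (u : V) : ∀ v ∈ cyc f u, f v ∈ cyc f u :=
  fun _ hv => cyc_fInv hv

lemma sum_shift_mem_cyc (f : V →ₗ[K] V) (u : V) (c : ℕ → K) (k n : ℕ)
    (hc : ∀ i < k, c i = 0) :
    ∑ i ∈ Finset.range n, c i • (f ^ i) u ∈ cyc f ((f ^ k) u) := by
  refine Submodule.sum_mem _ fun i _ => ?_
  by_cases h : i < k
  · rw [hc i h, zero_smul]; exact Submodule.zero_mem _
  · refine Submodule.smul_mem _ _ ?_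
    have hik : i - k + k = i := by omega
    have hi : (f ^ i) u = (f ^ (i - k)) ((f ^ k) u) := by
      rw [← pow_add_apply, hik]
    rw [hi]; exact pow_mem_cyc f _ _

lemma coord_high (hf : IsNilpotent f) {u : V} (d : ℕ → K) {k : ℕ}
    (hk : k ≤ expnt f u)
    (h : (f ^ k) (∑ j ∈ Finset.range (expnt f u), d j • (f ^ j) u) = 0) :
    ∀ j < expnt f u - k, d j = 0 := by
  set e := expnt f u with he
  have h1 : ∑ j ∈ Finset.range e, d j • (f ^ j) ((f ^ k) u) = 0 := by
    rw [← h, map_sum]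
    refine Finset.sum_congr rfl fun j _ => ?_
    rw [map_smul, ← pow_add_apply, Nat.add_comm, pow_add_apply]
  have h2 : ∑ j ∈ Finset.range (e - k), d j • (f ^ j) ((f ^ k) u) = 0 := by
    have hsplit : Finset.range e = Finset.range (e - k) ∪
        Finset.filter (fun j => e - k ≤ j) (Finset.range e) := by
      ext j
      simp only [Finset.mem_union, Finset.mem_range, Finset.mem_filter]
      omega
    rw [hsplit, Finset.sum_union] at h1
    · have hz : ∑ j ∈ Finset.filter (fun j => e - k ≤ j) (Finset.range e),
          d j • (f ^ j) ((f ^ k) u) = 0 := by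
        refine Finset.sum_eq_zero fun j hj => ?_
        simp only [Finset.mem_filter, Finset.mem_range] at hj
        have : (f ^ j) ((f ^ k) u) = 0 := by
          rw [← pow_add_apply]
          exact pow_apply_eq_zero hf (by omega)
        rw [this, smul_zero]
      rw [hz, add_zero] at h1
      exact h1
    · rw [Finset.disjoint_left]
      intro j hj hj2
      simp only [Finset.mem_range] at hj
      simp only [Finset.mem_filter, Finset.mem_range] at hj2
      omega
  have hek : expnt f ((f ^ k) u) = e - k := expnt_pow_apply hf hk
  intro j hj
  exact indep hf ((f ^ k) u) d (by rw [hek]; exact h2) j (by omega)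

lemma commutes_pow {α : V ≃ₗ[K] V} (hα : Commutes f α) (k : ℕ) (v : V) :
    α ((f ^ k) v) = (f ^ k) (α v) := by
  induction k with
  | zero => simp
  | succ n ih =>
    have h : ∀ w : V, (f ^ (n + 1)) w = f ((f ^ n) w) := fun w => by
      rw [Nat.add_comm, pow_add_apply, pow_one]
    rw [h, h, hα, ih]

lemma charHull_fInv (f : V →ₗ[K] V) (B : Set V) :
    ∀ v ∈ charHull f B, f v ∈ charHull f B := by
  intro v hv
  have hmap : Submodule.map f (charHull f B) ≤ charHull f B := by
    rw [charHull, Submodule.map_span]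
    apply Submodule.span_le.mpr
    rintro _ ⟨_, ⟨b, hb, i, α, hα, rfl⟩, rfl⟩
    have h : f ((f ^ i) (α b)) = (f ^ (1 + i)) (α b) := by
      rw [pow_add_apply, pow_one]
    rw [h]
    exact Submodule.subset_span ⟨b, hb, 1 + i, α, hα, rfl⟩
  exact hmap ⟨v, hv, rfl⟩

lemma mem_charHull (f : V →ₗ[K] V) {B : Set V} {b : V} (hb : b ∈ B) (i : ℕ)
    (α : V ≃ₗ[K] V) (hα : Commutes f α) : (f ^ i) (α b) ∈ charHull f B :=
  Submodule.subset_span ⟨b, hb, i, α, hα, rfl⟩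

end Aux2



section Key
variable {V : Type*} [AddCommGroup V] [Module (ZMod 2) V] [FiniteDimensional (ZMod 2) V]

theorem key12 (f : V →ₗ[ZMod 2] V) (hf : IsNilpotent f)
    (u₁ u₂ : V) (R S : ℕ) (hcompl : IsCompl (cyc f u₁) (cyc f u₂))
    (he₁ : expnt f u₁ = R) (he₂ : expnt f u₂ = S) (hRS : R + 1 < S)
    (s q : ℕ) (hs : 0 < s) (hsq : s < q) (hsR : s ≤ R)
    (hlt : (R : ℤ) - s < (S : ℤ) - q) :
    charHull f {(f ^ (R - s)) u₁ + (f ^ (S - q)) u₂} =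
      cyc f ((f ^ (R - s)) u₁ + (f ^ (S - q)) u₂) ⊔ cyc f ((f ^ (R - s + 1)) u₁) ∧
    Disjoint (cyc f ((f ^ (R - s)) u₁ + (f ^ (S - q)) u₂))
      (cyc f ((f ^ (R - s + 1)) u₁)) ∧
    Module.finrank (ZMod 2) ↥(cyc f ((f ^ (R - s)) u₁ + (f ^ (S - q)) u₂)) = q ∧
    Module.finrank (ZMod 2) ↥(cyc f ((f ^ (R - s + 1)) u₁)) = s - 1 := by
  have hZ : R + q < S + s := by
    have h2 : (R : ℤ) + q < S + s := by linarith
    exact_mod_cast h2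
  set a := R - s with ha
  set b := S - q with hb
  have har : a + s = R := by omega
  have hbr : b + q = S := by omega
  have hab : a + 1 ≤ b := by omega
  set x := (f ^ a) u₁ + (f ^ b) u₂ with hx
  set t := (f ^ (a + 1)) u₁ with ht
  have hdisj : Disjoint (cyc f u₁) (cyc f u₂) := hcompl.disjoint
  have hsup : cyc f u₁ ⊔ cyc f u₂ = ⊤ := hcompl.codisjoint.eq_top
  have hdec : ∀ v : V, ∃ A ∈ cyc f u₁, ∃ B ∈ cyc f u₂, v = A + B := by
    intro v
    have hv : v ∈ cyc f u₁ ⊔ cyc f u₂ := by rw [hsup]; trivial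
    obtain ⟨A, hA, B, hB, hAB⟩ := Submodule.mem_sup.mp hv
    exact ⟨A, hA, B, hB, hAB.symm⟩
  have hxpow : ∀ ℓ, (f ^ ℓ) x = (f ^ (ℓ + a)) u₁ + (f ^ (ℓ + b)) u₂ := by
    intro ℓ
    rw [hx, map_add, ← pow_add_apply, ← pow_add_apply]
  have hq0 : (f ^ q) x = 0 := by
    rw [hxpow q, pow_apply_eq_zero hf (by rw [he₁]; omega),
      pow_apply_eq_zero hf (by rw [he₂]; omega), add_zero]
  have hxne : ∀ ℓ < q, (f ^ ℓ) x ≠ 0 := by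
    intro ℓ hℓ h0
    rw [hxpow ℓ] at h0
    have hm1 : (f ^ (ℓ + b)) u₂ ∈ cyc f u₁ := by
      have : (f ^ (ℓ + b)) u₂ = -((f ^ (ℓ + a)) u₁) :=
        eq_neg_of_add_eq_zero_right h0
      rw [this]
      exact Submodule.neg_mem _ (pow_mem_cyc f u₁ _)
    have hz : (f ^ (ℓ + b)) u₂ = 0 :=
      Submodule.disjoint_def.mp hdisj _ hm1 (pow_mem_cyc f u₂ _)
    exact expnt_min (by rw [he₂]; omega) hz
  have hxe : expnt f x = q := by
    apply le_antisymm (Nat.sInf_le hq0)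
    by_contra hcon
    push_neg at hcon
    exact hxne _ hcon (expnt_spec hf x)
  have hte : expnt f t = s - 1 := by
    rw [ht, expnt_pow_apply hf (by rw [he₁]; omega), he₁]
    omega
  have hfr1 : Module.finrank (ZMod 2) ↥(cyc f x) = q := by
    rw [finrank_cyc hf, hxe]
  have hfr2 : Module.finrank (ZMod 2) ↥(cyc f t) = s - 1 := by
    rw [finrank_cyc hf, hte]
  -- the exponent of f^b u₂
  have hexb : expnt f ((f ^ b) u₂) = q := by
    rw [expnt_pow_apply hf (by rw [he₂]; omega), he₂]; omega
  -- Disjointness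
  have hdisjxt : Disjoint (cyc f x) (cyc f t) := by
    rw [Submodule.disjoint_def]
    intro v hvx hvt
    obtain ⟨c, hc⟩ := mem_cyc_sum hf hvx
    rw [hxe] at hc
    have hvt1 : v ∈ cyc f u₁ := cyc_pow_le f u₁ (a + 1) hvt
    have hAB : v = (∑ i ∈ Finset.range q, c i • (f ^ i) ((f ^ a) u₁))
        + (∑ i ∈ Finset.range q, c i • (f ^ i) ((f ^ b) u₂)) := by
      rw [hc, ← Finset.sum_add_distrib]
      refine Finset.sum_congr rfl fun i _ => ?_
      rw [hx, map_add, smul_add]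
    set A := ∑ i ∈ Finset.range q, c i • (f ^ i) ((f ^ a) u₁) with hAdef
    set B := ∑ i ∈ Finset.range q, c i • (f ^ i) ((f ^ b) u₂) with hBdef
    have hA1 : A ∈ cyc f u₁ := by
      refine Submodule.sum_mem _ fun i _ => Submodule.smul_mem _ _ ?_
      rw [← pow_add_apply]
      exact pow_mem_cyc f u₁ _
    have hB2 : B ∈ cyc f u₂ := by
      refine Submodule.sum_mem _ fun i _ => Submodule.smul_mem _ _ ?_
      rw [← pow_add_apply]
      exact pow_mem_cyc f u₂ _
    have hB1 : B ∈ cyc f u₁ := by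
      have hBv : B = v - A := by rw [hAB]; abel
      rw [hBv]
      exact Submodule.sub_mem _ hvt1 hA1
    have hB0 : B = 0 := Submodule.disjoint_def.mp hdisj B hB1 hB2
    have hc0 : ∀ i < q, c i = 0 := by
      have h1 := indep hf ((f ^ b) u₂) c (by rw [hexb]; exact hB0)
      rw [hexb] at h1
      exact h1
    rw [hc]
    exact Finset.sum_eq_zero fun i hi => by
      rw [hc0 i (Finset.mem_range.mp hi), zero_smul]
  -- the subspace W
  set W := cyc f x ⊔ cyc f t with hW
  have hWf : ∀ v ∈ W, f v ∈ W := sup_fInv (cyc_fInv' f x) (cyc_fInv' f t)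
  have hxW : x ∈ W := Submodule.mem_sup_left (mem_cyc_self f x)
  have htW : t ∈ W := Submodule.mem_sup_right (mem_cyc_self f t)
  have hfxt : (f ^ (b + 1)) u₂ = f x - t := by
    have h1 : f x = (f ^ (a + 1)) u₁ + (f ^ (b + 1)) u₂ := by
      rw [hx, map_add]
      congr 1
      · rw [Nat.add_comm a 1, pow_add_apply, pow_one]
      · rw [Nat.add_comm b 1, pow_add_apply, pow_one]
    rw [h1, ht]; abel
  have hcycb1W : cyc f ((f ^ (b + 1)) u₂) ≤ W := by
    refine cyc_le hWf ?_
    rw [hfxt]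
    exact Submodule.sub_mem _ (hWf x hxW) htW
  -- X ⊇ W
  set X := charHull f {x} with hX
  have hXf : ∀ v ∈ X, f v ∈ X := charHull_fInv f {x}
  have hxX : x ∈ X := by
    have h := mem_charHull f (Set.mem_singleton x) 0 (LinearEquiv.refl (ZMod 2) V)
      (fun v => rfl)
    simpa using h
  obtain ⟨α₁, hc₁, hα₁W₁, hα₁W₂⟩ := exists_auto hf (cyc f u₁) (cyc f u₂) hcompl
    (cyc_fInv' f u₁) (cyc_fInv' f u₂)
  have hα₁x : α₁ x = x + t := by
    rw [hx, map_add, hα₁W₁ _ (pow_mem_cyc f u₁ a), hα₁W₂ _ (pow_mem_cyc f u₂ b)]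
    have h2 : f ((f ^ a) u₁) = (f ^ (a + 1)) u₁ := by
      rw [Nat.add_comm, pow_add_apply, pow_one]
    rw [h2, ht]
    abel
  have htX : t ∈ X := by
    have h1 : α₁ x ∈ X := by
      have h := mem_charHull f (Set.mem_singleton x) 0 α₁ hc₁
      simpa using h
    have h2 := Submodule.sub_mem _ h1 hxX
    rw [hα₁x, add_sub_cancel_left] at h2
    exact h2
  have hWX : W ≤ X := sup_le (cyc_le hXf hxX) (cyc_le hXf htX)
  -- kernel decomposition
  have hu₁R : (f ^ R) u₁ = 0 := pow_apply_eq_zero hf (by rw [he₁])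
  have hu₂S : (f ^ S) u₂ = 0 := pow_apply_eq_zero hf (by rw [he₂])
  have hpowcomm : ∀ (k : ℕ) (v : V), (f ^ k) (f v) = f ((f ^ k) v) := by
    intro k v
    have h1 : (f ^ (k + 1)) v = (f ^ k) (f v) := by
      rw [pow_succ, Module.End.mul_apply]
    have h2 : (f ^ (1 + k)) v = f ((f ^ k) v) := by
      rw [pow_add_apply, pow_one]
    rw [← h1, ← h2, Nat.add_comm]
  have hkerInv : ∀ v ∈ LinearMap.ker (f ^ R), f v ∈ LinearMap.ker (f ^ R) := by
    intro v hv
    rw [LinearMap.mem_ker] at hv ⊢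
    rw [hpowcomm, hv, map_zero]
  have hrangeInv : ∀ v ∈ LinearMap.range f, f v ∈ LinearMap.range f :=
    fun v _ => ⟨v, rfl⟩
  have hcyc1ker : cyc f u₁ ≤ LinearMap.ker (f ^ R) :=
    cyc_le hkerInv (by rw [LinearMap.mem_ker]; exact hu₁R)
  have hkercyc : ∀ v : V, (f ^ R) v = 0 → ∃ c d : ℕ → ZMod 2,
      (∀ j < S - R, d j = 0) ∧
      v = ∑ i ∈ Finset.range R, c i • (f ^ i) u₁
        + ∑ j ∈ Finset.range S, d j • (f ^ j) u₂ := by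
    intro v hv
    obtain ⟨A, hA, B, hB, rfl⟩ := hdec v
    obtain ⟨c, hc⟩ := mem_cyc_sum hf hA
    obtain ⟨d, hd⟩ := mem_cyc_sum hf hB
    rw [he₁] at hc; rw [he₂] at hd
    refine ⟨c, d, ?_, by rw [hc, hd]⟩
    have hfA : (f ^ R) A = 0 := by
      have h1 : (f ^ R) A ∈ cyc f ((f ^ R) u₁) := pow_apply_mem_cyc_pow R hA
      rw [hu₁R, cyc_zero] at h1
      simpa using h1
    have hfB : (f ^ R) B = 0 := by
      have h2 : (f ^ R) A + (f ^ R) B = 0 := by rw [← map_add, hv]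
      rw [hfA, zero_add] at h2
      exact h2
    have hble : R ≤ expnt f u₂ := by rw [he₂]; omega
    have hsum0 : (f ^ R) (∑ j ∈ Finset.range (expnt f u₂), d j • (f ^ j) u₂) = 0 := by
      rw [he₂, ← hd]; exact hfB
    have h3 := coord_high hf d hble hsum0
    rw [he₂] at h3
    exact h3
  -- the submodules M, M₀, M', M'₀
  set M : Submodule (ZMod 2) V := LinearMap.ker (f ^ R) ⊓ LinearMap.range f with hM
  set M' : Submodule (ZMod 2) V := LinearMap.ker (f ^ R) ⊔ LinearMap.range f with hM'
  set M₀ : Submodule (ZMod 2) V := cyc f (f u₁) ⊔ cyc f ((f ^ (S - R)) u₂) with hM₀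
  set M'₀ : Submodule (ZMod 2) V := cyc f u₁ ⊔ cyc f (f u₂) with hM'₀
  have hSR1 : 1 ≤ S - R := by omega
  have hfu₁ker : (f ^ R) (f u₁) = 0 := by rw [hpowcomm, hu₁R, map_zero]
  have hfSRker : (f ^ R) ((f ^ (S - R)) u₂) = 0 := by
    rw [← pow_add_apply]
    have : R + (S - R) = S := by omega
    rw [this, hu₂S]
  have hfSRrange : (f ^ (S - R)) u₂ ∈ LinearMap.range f := by
    set m := S - R - 1 with hm
    have h2 : S - R = 1 + m := by omega
    have h1 : (f ^ (S - R)) u₂ = f ((f ^ m) u₂) := by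
      rw [h2, pow_add_apply, pow_one]
    exact ⟨_, h1.symm⟩
  have hM₀M : M₀ ≤ M := by
    rw [hM₀, hM]
    apply sup_le
    · exact le_inf (cyc_le hkerInv hfu₁ker) (cyc_le hrangeInv ⟨u₁, rfl⟩)
    · exact le_inf (cyc_le hkerInv hfSRker) (cyc_le hrangeInv hfSRrange)
  have hshiftc : ∀ (c : ℕ → ZMod 2),
      ∑ i ∈ Finset.range (R - 1), c (i + 1) • (f ^ (i + 1)) u₁ ∈ cyc f (f u₁) := by
    intro c
    refine Submodule.sum_mem _ fun i _ => Submodule.smul_mem _ _ ?_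
    rw [pow_succ, Module.End.mul_apply]
    exact pow_mem_cyc f (f u₁) i
  have hshiftd : ∀ (d : ℕ → ZMod 2),
      ∑ j ∈ Finset.range (S - 1), d (j + 1) • (f ^ (j + 1)) u₂ ∈ cyc f (f u₂) := by
    intro d
    refine Submodule.sum_mem _ fun j _ => Submodule.smul_mem _ _ ?_
    rw [pow_succ, Module.End.mul_apply]
    exact pow_mem_cyc f (f u₂) j
  have hMM₀ : M ≤ M₀ := by
    intro v hv
    rw [hM, Submodule.mem_inf] at hv
    obtain ⟨w, hw⟩ := hv.2
    have hk' : (f ^ R) v = 0 := hv.1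
    obtain ⟨c, d, hdlow, hv2⟩ := hkercyc v hk'
    obtain ⟨A, hA, B, hB, rfl⟩ := hdec w
    set csum := ∑ i ∈ Finset.range R, c i • (f ^ i) u₁ with hcsum
    set dsum := ∑ j ∈ Finset.range S, d j • (f ^ j) u₂ with hdsum
    have hfA : f A ∈ cyc f u₁ := cyc_fInv hA
    have hfB : f B ∈ cyc f u₂ := cyc_fInv hB
    have heq : csum + dsum = f A + f B := by rw [← hv2, ← hw, map_add]
    have h0 : csum - f A = f B - dsum := by
      rw [sub_eq_sub_iff_add_eq_add, heq]
      abel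
    have hL1 : csum - f A ∈ cyc f u₁ :=
      Submodule.sub_mem _ (sum_mem_cyc f u₁ c R) hfA
    have hL2 : csum - f A ∈ cyc f u₂ := by
      rw [h0]
      exact Submodule.sub_mem _ hfB (sum_mem_cyc f u₂ d S)
    have hL0 : csum - f A = 0 := Submodule.disjoint_def.mp hdisj _ hL1 hL2
    have hcsA : csum = f A := by
      have := sub_eq_zero.mp hL0
      exact this
    have hdsB : dsum = f B := by
      have h1 : f B - dsum = 0 := by rw [← h0, hL0]
      have := sub_eq_zero.mp h1
      exact this.symm
    have hcs1 : csum ∈ cyc f (f u₁) := by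
      rw [hcsA]
      have h1 := pow_apply_mem_cyc_pow (f := f) 1 hA
      simp only [pow_one] at h1
      exact h1
    have hds1 : dsum ∈ cyc f ((f ^ (S - R)) u₂) :=
      sum_shift_mem_cyc f u₂ d (S - R) S hdlow
    rw [hv2, hM₀]
    exact Submodule.add_mem _ (Submodule.mem_sup_left hcs1)
      (Submodule.mem_sup_right hds1)
  have hM'₀M' : M'₀ ≤ M' := by
    rw [hM'₀, hM']
    apply sup_le
    · exact le_trans hcyc1ker le_sup_left
    · exact le_trans (cyc_le hrangeInv ⟨u₂, rfl⟩) le_sup_right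
  have hM'M'₀ : M' ≤ M'₀ := by
    rw [hM', hM'₀]
    apply sup_le
    · intro v hv
      rw [LinearMap.mem_ker] at hv
      obtain ⟨c, d, hdlow, hv2⟩ := hkercyc v hv
      rw [hv2]
      refine Submodule.add_mem _ (Submodule.mem_sup_left (sum_mem_cyc f u₁ c R)) ?_
      refine Submodule.mem_sup_right ?_
      have h1 : ∑ j ∈ Finset.range S, d j • (f ^ j) u₂ ∈ cyc f ((f ^ (S - R)) u₂) :=
        sum_shift_mem_cyc f u₂ d (S - R) S hdlow
      have h2 : cyc f ((f ^ (S - R)) u₂) ≤ cyc f ((f ^ 1) u₂) :=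
        cyc_mono_pow f u₂ hSR1
      rw [pow_one] at h2
      exact h2 h1
    · rintro v ⟨w, rfl⟩
      obtain ⟨A, hA, B, hB, rfl⟩ := hdec w
      rw [map_add]
      refine Submodule.add_mem _ (Submodule.mem_sup_left (cyc_fInv hA)) ?_
      refine Submodule.mem_sup_right ?_
      have h1 := pow_apply_mem_cyc_pow (f := f) 1 hB
      simp only [pow_one] at h1
      exact h1
  -- u₁ ∉ M₀, u₂ ∉ M'₀
  have hz2 : ∀ z : ZMod 2, z = 0 ∨ z = 1 := by decide
  have hnotgen : ∀ (u : V) (e : ℕ), expnt f u = e → 1 ≤ e → u ∉ cyc f (f u) := by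
    intro u e heu he1 hmem
    obtain ⟨p, hp⟩ := mem_cyc_sum hf hmem
    have hefu : expnt f (f u) = e - 1 := by
      have h1 := expnt_pow_apply hf (x := u) (k := 1) (by omega)
      rw [pow_one] at h1
      omega
    rw [hefu] at hp
    set c : ℕ → ZMod 2 := fun i => if i = 0 then (-1 : ZMod 2) else p (i - 1) with hcdef
    have hsum : ∑ i ∈ Finset.range e, c i • (f ^ i) u = 0 := by
      have hre : e = (e - 1) + 1 := by omega
      rw [hre, Finset.sum_range_succ']
      have h2 : ∀ i ∈ Finset.range (e - 1),
          c (i + 1) • (f ^ (i + 1)) u = p i • (f ^ i) (f u) := by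
        intro i _
        rw [hcdef]
        simp only [Nat.add_sub_cancel, if_neg (Nat.succ_ne_zero i)]
        rw [pow_succ, Module.End.mul_apply]
      rw [Finset.sum_congr rfl h2]
      simp only [hcdef, if_pos rfl, pow_zero, Module.End.one_apply, neg_smul, one_smul]
      rw [← hp]
      abel
    have := indep hf u c (by rw [heu]; exact hsum) 0 (by omega)
    rw [hcdef] at this
    simp at this
  have hu₁M₀ : u₁ ∉ M₀ := by
    intro h
    rw [hM₀] at h
    obtain ⟨p, hp, r, hr, hpr⟩ := Submodule.mem_sup.mp h
    have hr2 : r ∈ cyc f u₂ := cyc_pow_le f u₂ (S - R) hr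
    have hp1 : p ∈ cyc f u₁ := cyc_pow_le f u₁ 1 (by rwa [pow_one])
    have hrr : r = u₁ - p := by rw [← hpr]; abel
    have hr1 : r ∈ cyc f u₁ := by
      rw [hrr]
      exact Submodule.sub_mem _ (mem_cyc_self f u₁) hp1
    have hr0 : r = 0 := Submodule.disjoint_def.mp hdisj r hr1 hr2
    have hu1p : u₁ = p := by
      rw [hr0] at hrr
      have h5 := hrr.symm
      rwa [sub_eq_zero] at h5
    rw [← hu1p] at hp
    exact hnotgen u₁ R he₁ (by omega) hp
  have hu₂M'₀ : u₂ ∉ M'₀ := by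
    intro h
    rw [hM'₀] at h
    obtain ⟨p, hp, r, hr, hpr⟩ := Submodule.mem_sup.mp h
    have hr2 : r ∈ cyc f u₂ := cyc_pow_le f u₂ 1 (by rwa [pow_one])
    have hpp : p = u₂ - r := by rw [← hpr]; abel
    have hp2 : p ∈ cyc f u₂ := by
      rw [hpp]; exact Submodule.sub_mem _ (mem_cyc_self f u₂) hr2
    have hp0 : p = 0 := Submodule.disjoint_def.mp hdisj p hp hp2
    have hu2r : u₂ = r := by
      rw [hp0] at hpp
      have h5 := hpp.symm
      rwa [sub_eq_zero] at h5
    rw [← hu2r] at hr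
    exact hnotgen u₂ S he₂ (by omega) hr
  -- invariance of M, ker, M' under commuting automorphisms
  have hkerinv : ∀ (α : V ≃ₗ[ZMod 2] V), Commutes f α →
      ∀ v ∈ LinearMap.ker (f ^ R), α v ∈ LinearMap.ker (f ^ R) := by
    intro α hα v hv
    rw [LinearMap.mem_ker] at hv ⊢
    rw [← commutes_pow hα, hv, map_zero]
  have hMinv : ∀ (α : V ≃ₗ[ZMod 2] V), Commutes f α → ∀ v ∈ M, α v ∈ M := by
    intro α hα v hv
    rw [hM, Submodule.mem_inf] at hv ⊢
    constructor
    · exact hkerinv α hα v hv.1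
    · obtain ⟨w, hw⟩ := hv.2
      exact ⟨α w, by rw [← hα w, hw]⟩
  have hM'inv : ∀ (α : V ≃ₗ[ZMod 2] V), Commutes f α → ∀ v ∈ M', α v ∈ M' := by
    intro α hα v hv
    rw [hM'] at hv ⊢
    obtain ⟨v1, hv1, v2, hv2, rfl⟩ := Submodule.mem_sup.mp hv
    rw [map_add]
    refine Submodule.add_mem _ (Submodule.mem_sup_left (hkerinv α hα v1 hv1)) ?_
    obtain ⟨w, hw⟩ := hv2
    exact Submodule.mem_sup_right ⟨α w, by rw [← hα w, hw]⟩
  -- Claim A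
  have hclaimA : ∀ (α : V ≃ₗ[ZMod 2] V), Commutes f α → α u₁ - u₁ ∈ M₀ := by
    intro α hα
    apply hMM₀
    apply auto_fix α (hMinv α hα) (hkerinv α hα) (LinearMap.mem_ker.mpr hu₁R)
      (fun h => hu₁M₀ (hMM₀ h))
    intro v hv
    rw [LinearMap.mem_ker] at hv
    obtain ⟨c, d, hdlow, hv2⟩ := hkercyc v hv
    have hR1 : R - 1 + 1 = R := by omega
    have hsplit := Finset.sum_range_succ' (fun i => c i • (f ^ i) u₁) (R - 1)
    rw [hR1] at hsplit
    set rest := (∑ i ∈ Finset.range (R - 1), c (i + 1) • (f ^ (i + 1)) u₁)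
      + ∑ j ∈ Finset.range S, d j • (f ^ j) u₂ with hrest
    have hvrest : v = c 0 • u₁ + rest := by
      rw [hv2, hsplit, hrest]
      simp only [pow_zero, Module.End.one_apply]
      abel
    have hrestM : rest ∈ M := by
      apply hM₀M
      rw [hM₀, hrest]
      exact Submodule.add_mem _ (Submodule.mem_sup_left (hshiftc c))
        (Submodule.mem_sup_right (sum_shift_mem_cyc f u₂ d (S - R) S hdlow))
    rcases hz2 (c 0) with h0 | h1
    · left; rw [hvrest, h0, zero_smul, zero_add]; exact hrestM
    · right; rw [hvrest, h1, one_smul, add_sub_cancel_left]; exact hrestM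
  -- Claim B
  have hclaimB : ∀ (α : V ≃ₗ[ZMod 2] V), Commutes f α → α u₂ - u₂ ∈ M'₀ := by
    intro α hα
    apply hM'M'₀
    apply auto_fix α (hM'inv α hα) (fun v _ => Submodule.mem_top) Submodule.mem_top
      (fun h => hu₂M'₀ (hM'M'₀ h))
    intro v _
    obtain ⟨A, hA2, B, hB2, rfl⟩ := hdec v
    obtain ⟨d, hd⟩ := mem_cyc_sum hf hB2
    rw [he₂] at hd
    have hS1 : S - 1 + 1 = S := by omega
    have hsplit := Finset.sum_range_succ' (fun j => d j • (f ^ j) u₂) (S - 1)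
    rw [hS1] at hsplit
    set rest := A + ∑ j ∈ Finset.range (S - 1), d (j + 1) • (f ^ (j + 1)) u₂ with hrest
    have hvrest : A + B = d 0 • u₂ + rest := by
      rw [hd, hsplit, hrest]
      simp only [pow_zero, Module.End.one_apply]
      abel
    have hrestM : rest ∈ M' := by
      apply hM'₀M'
      rw [hM'₀, hrest]
      exact Submodule.add_mem _ (Submodule.mem_sup_left hA2)
        (Submodule.mem_sup_right (hshiftd d))
    rcases hz2 (d 0) with h0 | h1
    · left; rw [hvrest, h0, zero_smul, zero_add]; exact hrestM
    · right; rw [hvrest, h1, one_smul, add_sub_cancel_left]; exact hrestM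
  -- X ≤ W
  have hXW : X ≤ W := by
    rw [hX, charHull]
    apply Submodule.span_le.mpr
    rintro _ ⟨bb, hbb, i, α, hα, rfl⟩
    rw [Set.mem_singleton_iff] at hbb
    subst hbb
    refine pow_mem_of_fInv hWf ?_ i
    have hm₁ := hclaimA α hα
    have hm₂ := hclaimB α hα
    have hαx : α x = x + ((f ^ a) (α u₁ - u₁) + (f ^ b) (α u₂ - u₂)) := by
      rw [hx, map_add α, commutes_pow hα, commutes_pow hα, map_sub, map_sub]
      abel
    rw [hαx]
    refine Submodule.add_mem _ hxW (Submodule.add_mem _ ?_ ?_)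
    · rw [hM₀] at hm₁
      obtain ⟨p, hp, r, hr, hpr⟩ := Submodule.mem_sup.mp hm₁
      rw [← hpr, map_add]
      refine Submodule.add_mem _ ?_ ?_
      · have h1 := pow_apply_mem_cyc_pow a hp
        have h2 : (f ^ a) (f u₁) = t := by
          rw [ht, pow_add_apply f a 1, pow_one]
        rw [h2] at h1
        exact Submodule.mem_sup_right h1
      · have h1 := pow_apply_mem_cyc_pow a hr
        have h2 : (f ^ a) ((f ^ (S - R)) u₂) = (f ^ (a + (S - R))) u₂ :=
          (pow_add_apply f a (S - R) u₂).symm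
        rw [h2] at h1
        have h3 : cyc f ((f ^ (a + (S - R))) u₂) ≤ cyc f ((f ^ (b + 1)) u₂) :=
          cyc_mono_pow f u₂ (by omega)
        exact hcycb1W (h3 h1)
    · rw [hM'₀] at hm₂
      obtain ⟨p, hp, r, hr, hpr⟩ := Submodule.mem_sup.mp hm₂
      rw [← hpr, map_add]
      refine Submodule.add_mem _ ?_ ?_
      · have h1 := pow_apply_mem_cyc_pow b hp
        have h3 : cyc f ((f ^ b) u₁) ≤ cyc f ((f ^ (a + 1)) u₁) :=
          cyc_mono_pow f u₁ hab
        exact Submodule.mem_sup_right (h3 h1)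
      · have h1 := pow_apply_mem_cyc_pow b hr
        have h2 : (f ^ b) (f u₂) = (f ^ (b + 1)) u₂ := by
          rw [pow_add_apply f b 1, pow_one]
        rw [h2] at h1
        exact hcycb1W h1
  exact ⟨le_antisymm hXW hWX, hdisjxt, hfr1, hfr2⟩

end Key

theorem stmt12 (V : Type*) [AddCommGroup V] [Module (ZMod 2) V]
    [FiniteDimensional (ZMod 2) V] (f : V →ₗ[ZMod 2] V) (hf : IsNilpotent f)
    (u₁ u₂ : V) (R S : ℕ) (hcompl : IsCompl (cyc f u₁) (cyc f u₂))
    (he₁ : expnt f u₁ = R) (he₂ : expnt f u₂ = S) (hRS : R + 1 < S)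
    (s q : ℕ) (hs : 0 < s) (hsq : s < q) (hsR : s ≤ R)
    (hlt : (R : ℤ) - s < (S : ℤ) - q) :
    Module.finrank (ZMod 2)
        ↥(charHull f {(f ^ (R - s)) u₁ + (f ^ (S - q)) u₂}) = s + q - 1 ∧
      (1 < s →
        charHull f {(f ^ (R - s)) u₁ + (f ^ (S - q)) u₂} =
          cyc f ((f ^ (R - s)) u₁ + (f ^ (S - q)) u₂) ⊔
            cyc f ((f ^ (R - s + 1)) u₁) ∧
        Disjoint (cyc f ((f ^ (R - s)) u₁ + (f ^ (S - q)) u₂))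
          (cyc f ((f ^ (R - s + 1)) u₁)) ∧
        Module.finrank (ZMod 2)
          ↥(cyc f ((f ^ (R - s)) u₁ + (f ^ (S - q)) u₂)) = q ∧
        Module.finrank (ZMod 2) ↥(cyc f ((f ^ (R - s + 1)) u₁)) = s - 1) ∧
      (s = 1 →
        charHull f {(f ^ (R - s)) u₁ + (f ^ (S - q)) u₂} =
          cyc f ((f ^ (R - s)) u₁ + (f ^ (S - q)) u₂) ∧
        Module.finrank (ZMod 2)
          ↥(cyc f ((f ^ (R - s)) u₁ + (f ^ (S - q)) u₂)) = q) := by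
  obtain ⟨hXeq, hdisj2, hfr1, hfr2⟩ :=
    key12 f hf u₁ u₂ R S hcompl he₁ he₂ hRS s q hs hsq hsR hlt
  have hdim : Module.finrank (ZMod 2)
      ↥(charHull f {(f ^ (R - s)) u₁ + (f ^ (S - q)) u₂}) = s + q - 1 := by
    rw [hXeq]
    have h := Submodule.finrank_sup_add_finrank_inf_eq
      (cyc f ((f ^ (R - s)) u₁ + (f ^ (S - q)) u₂)) (cyc f ((f ^ (R - s + 1)) u₁))
    rw [disjoint_iff.mp hdisj2, finrank_bot, hfr1, hfr2] at h
    omega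
  refine ⟨hdim, fun _ => ⟨hXeq, hdisj2, hfr1, hfr2⟩, fun hs1 => ⟨?_, hfr1⟩⟩
  have hzero : (f ^ (R - s + 1)) u₁ = 0 := by
    have h1 : R - s + 1 = R := by omega
    rw [h1]
    exact pow_apply_eq_zero hf (by rw [he₁])
  rw [hXeq, hzero, cyc_zero, sup_bot_eq]
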